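/- Let a²,b²,c² > 0, k ∈ ℤ∖{0}, 0 < R ≤ ∞, and let w₀, w₁, w₂ ∈ C²((0,R)) be such that the map Q(x) = w₀(r)E₀ + w₁(r)E₁(φ) + w₂(r)E₂(φ) (x = (r cos φ, r sin φ)) extends to a C² map on all of B_R and satisfies ΔQ = −a²Q − b²(Q² − (1/3)|Q|²I₃) + c²|Q|²Q on B_R. Then w₁'(r)w₂(r) − w₂'(r)w₁(r) = 0 for every r ∈ (0,R). -/

import Mathlib

open Real Matrix
open scoped ENNReal

noncomputable section

abbrev Mat3 := Matrix (Fin 3) (Fin 3) ℝ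

/-- `Q` is a symmetric traceless 3×3 real matrix, i.e. an element of `S₀`. -/
def isS0 (Q : Mat3) : Prop := Qᵀ = Q ∧ Q.trace = 0

def e1 : Fin 3 → ℝ := ![1, 0, 0]
def e2 : Fin 3 → ℝ := ![0, 1, 0]
def e3 : Fin 3 → ℝ := ![0, 0, 1]

/-- `n(φ) = (cos(kφ/2), sin(kφ/2), 0)`. -/
def nvec (k : ℤ) (φ : ℝ) : Fin 3 → ℝ := ![Real.cos ((k : ℝ) * φ / 2), Real.sin ((k : ℝ) * φ / 2), 0]

/-- `m(φ) = (−sin(kφ/2), cos(kφ/2), 0)`. -/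
def mvec (k : ℤ) (φ : ℝ) : Fin 3 → ℝ := ![-Real.sin ((k : ℝ) * φ / 2), Real.cos ((k : ℝ) * φ / 2), 0]

/-- `I₂ = I₃ − e₃ ⊗ e₃`. -/
def I2 : Mat3 := 1 - vecMulVec e3 e3

def E0 : Mat3 := Real.sqrt (3/2) • (vecMulVec e3 e3 - (1/3 : ℝ) • (1 : Mat3))
def E1 (k : ℤ) (φ : ℝ) : Mat3 :=
  Real.sqrt 2 • (vecMulVec (nvec k φ) (nvec k φ) - (1/2 : ℝ) • I2)
def E2mat (k : ℤ) (φ : ℝ) : Mat3 :=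
  (Real.sqrt 2)⁻¹ • (vecMulVec (nvec k φ) (mvec k φ) + vecMulVec (mvec k φ) (nvec k φ))
def E3mat : Mat3 := (Real.sqrt 2)⁻¹ • (vecMulVec e1 e3 + vecMulVec e3 e1)
def E4mat : Mat3 := (Real.sqrt 2)⁻¹ • (vecMulVec e2 e3 + vecMulVec e3 e2)

/-- The rotation `R_k(ψ)` of winding `k/2` about the vertical axis. -/
def Rk (k : ℤ) (ψ : ℝ) : Mat3 :=
  !![Real.cos ((k : ℝ) * ψ / 2), -Real.sin ((k : ℝ) * ψ / 2), 0;
     Real.sin ((k : ℝ) * ψ / 2),  Real.cos ((k : ℝ) * ψ / 2), 0;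
     0, 0, 1]

/-- The Landau-de Gennes bulk potential. -/
def fbulk (a2 b2 c2 : ℝ) (Q : Mat3) : ℝ :=
  -(a2/2) * (Q*Q).trace - (b2/3) * (Q*Q*Q).trace + (c2/4) * ((Q*Q).trace)^2

/-- The constant `s₊ = (b² + √(b⁴ + 24a²c²))/(4c²)`. -/
def splus (a2 b2 c2 : ℝ) : ℝ := (b2 + Real.sqrt (b2^2 + 24*a2*c2)) / (4*c2)

/-- Laplacian of a scalar function on `ℝ²`, as the sum of the two repeated partial
derivatives along the coordinate axes. -/
def lap (f : ℝ × ℝ → ℝ) (p : ℝ × ℝ) : ℝ :=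
  deriv (fun t => deriv (fun s => f (s, p.2)) t) p.1 +
  deriv (fun t => deriv (fun s => f (p.1, s)) t) p.2

/-- Componentwise Laplacian of a matrix-valued map on `ℝ²`. -/
def matLap (Q : ℝ × ℝ → Mat3) (p : ℝ × ℝ) : Mat3 :=
  Matrix.of fun i j => lap (fun x => Q x i j) p

/-- Squared norm of the gradient of a scalar function on `ℝ²`. -/
def gradNormSq (f : ℝ × ℝ → ℝ) (p : ℝ × ℝ) : ℝ :=
  (fderiv ℝ f p (1, 0))^2 + (fderiv ℝ f p (0, 1))^2

/-- `|∇Q|²`: sum over all matrix entries of the squared norms of their gradients. -/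
def matGradNormSq (Q : ℝ × ℝ → Mat3) (p : ℝ × ℝ) : ℝ :=
  ∑ i, ∑ j, gradNormSq (fun x => Q x i j) p

/-- Membership in the open disk of radius `R ∈ (0,∞]` centered at the origin. -/
def inBall (R : ℝ≥0∞) (x : ℝ × ℝ) : Prop :=
  ENNReal.ofReal (Real.sqrt (x.1^2 + x.2^2)) < R

/-- The right-hand side of the Euler–Lagrange equation
`ΔQ = −a²Q − b²(Q² − (1/3)|Q|²I₃) + c²|Q|²Q`. -/
def ELrhs (a2 b2 c2 : ℝ) (A : Mat3) : Mat3 :=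
  -a2 • A - b2 • (A * A - ((1/3 : ℝ) * (A * A).trace) • (1 : Mat3)) + (c2 * (A * A).trace) • A

/-- Frobenius squared norm of a 3×3 matrix. -/
def frobSq (A : Mat3) : ℝ := ∑ i, ∑ j, (A i j)^2

/-- For `x = (x₁,x₂) ∈ ℝ²`, `x̃ = (x₁,x₂,0) ∈ ℝ³`. -/
def tilde (x : ℝ × ℝ) : Fin 3 → ℝ := ![x.1, x.2, 0]

/-- The projection `P₂(x₁,x₂,x₃) = (x₁,x₂)`. -/
def P2 (v : Fin 3 → ℝ) : ℝ × ℝ := (v 0, v 1)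

/-- The antisymmetric matrix `S₀ = e₂⊗e₁ − e₁⊗e₂`. -/
def S0mat : Mat3 := vecMulVec e2 e1 - vecMulVec e1 e2

end

section AuxLemmas

open Real

lemma slice1_deriv {Uo : Set (ℝ × ℝ)} (hU : IsOpen Uo) {f : ℝ × ℝ → ℝ}
    (hf : ContDiffOn ℝ 2 f Uo) {t y : ℝ} (ht : (t, y) ∈ Uo) :
    HasDerivAt (fun s => f (s, y)) (fderiv ℝ f (t, y) (1, 0)) t := by
  have hdf : DifferentiableAt ℝ f (t, y) :=
    (hf.differentiableOn (by norm_num)).differentiableAt (hU.mem_nhds ht)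
  have hline : HasDerivAt (fun s : ℝ => (s, y)) ((1 : ℝ), (0 : ℝ)) t :=
    (hasDerivAt_id t).prodMk (hasDerivAt_const t y)
  exact hdf.hasFDerivAt.comp_hasDerivAt t hline

lemma slice2_deriv {Uo : Set (ℝ × ℝ)} (hU : IsOpen Uo) {f : ℝ × ℝ → ℝ}
    (hf : ContDiffOn ℝ 2 f Uo) {x t : ℝ} (ht : (x, t) ∈ Uo) :
    HasDerivAt (fun s => f (x, s)) (fderiv ℝ f (x, t) (0, 1)) t := by
  have hdf : DifferentiableAt ℝ f (x, t) :=
    (hf.differentiableOn (by norm_num)).differentiableAt (hU.mem_nhds ht)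
  have hline : HasDerivAt (fun s : ℝ => (x, s)) ((0 : ℝ), (1 : ℝ)) t :=
    (hasDerivAt_const t x).prodMk (hasDerivAt_id t)
  exact hdf.hasFDerivAt.comp_hasDerivAt t hline

lemma fderiv_apply_diff1 {Uo : Set (ℝ × ℝ)} (hU : IsOpen Uo) {f : ℝ × ℝ → ℝ}
    (hf : ContDiffOn ℝ 2 f Uo) {t y : ℝ} (ht : (t, y) ∈ Uo) (v : ℝ × ℝ) :
    DifferentiableAt ℝ (fun s => fderiv ℝ f (s, y) v) t := by
  have h1 : ContDiffOn ℝ 1 (fderiv ℝ f) Uo := hf.fderiv_of_isOpen hU (by norm_num)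
  have h2 : DifferentiableAt ℝ (fderiv ℝ f) (t, y) :=
    (h1.differentiableOn (by norm_num)).differentiableAt (hU.mem_nhds ht)
  have hline : DifferentiableAt ℝ (fun s : ℝ => (s, y)) t :=
    (differentiableAt_id).prodMk (differentiableAt_const y)
  exact (h2.comp t hline).clm_apply (differentiableAt_const v)

lemma fderiv_apply_diff2 {Uo : Set (ℝ × ℝ)} (hU : IsOpen Uo) {f : ℝ × ℝ → ℝ}
    (hf : ContDiffOn ℝ 2 f Uo) {x t : ℝ} (ht : (x, t) ∈ Uo) (v : ℝ × ℝ) :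
    DifferentiableAt ℝ (fun s => fderiv ℝ f (x, s) v) t := by
  have h1 : ContDiffOn ℝ 1 (fderiv ℝ f) Uo := hf.fderiv_of_isOpen hU (by norm_num)
  have h2 : DifferentiableAt ℝ (fderiv ℝ f) (x, t) :=
    (h1.differentiableOn (by norm_num)).differentiableAt (hU.mem_nhds ht)
  have hline : DifferentiableAt ℝ (fun s : ℝ => (x, s)) t :=
    (differentiableAt_const x).prodMk differentiableAt_id
  exact (h2.comp t hline).clm_apply (differentiableAt_const v)

lemma lap_comb {Uo : Set (ℝ × ℝ)} (hU : IsOpen Uo) {f g : ℝ × ℝ → ℝ} (a b : ℝ)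
    {p : ℝ × ℝ} (hp : p ∈ Uo)
    (hf : ContDiffOn ℝ 2 f Uo) (hg : ContDiffOn ℝ 2 g Uo) :
    lap (fun x => a * f x + b * g x) p = a * lap f p + b * lap g p := by
  obtain ⟨x, y⟩ := p
  have hnb1 : ∀ᶠ t in nhds x, (t, y) ∈ Uo := by
    have : Continuous (fun s : ℝ => (s, y)) := by fun_prop
    exact this.continuousAt.preimage_mem_nhds (hU.mem_nhds hp)
  have hnb2 : ∀ᶠ t in nhds y, (x, t) ∈ Uo := by
    have : Continuous (fun s : ℝ => (x, s)) := by fun_prop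
    exact this.continuousAt.preimage_mem_nhds (hU.mem_nhds hp)
  have key1 : ∀ (h : ℝ × ℝ → ℝ), ContDiffOn ℝ 2 h Uo →
      deriv (fun t => deriv (fun s => h (s, y)) t) x
        = deriv (fun t => fderiv ℝ h (t, y) (1, 0)) x := by
    intro h hh
    apply Filter.EventuallyEq.deriv_eq
    filter_upwards [hnb1] with t ht
    exact (slice1_deriv hU hh ht).deriv
  have key2 : ∀ (h : ℝ × ℝ → ℝ), ContDiffOn ℝ 2 h Uo →
      deriv (fun t => deriv (fun s => h (x, s)) t) y
        = deriv (fun t => fderiv ℝ h (x, t) (0, 1)) y := by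
    intro h hh
    apply Filter.EventuallyEq.deriv_eq
    filter_upwards [hnb2] with t ht
    exact (slice2_deriv hU hh ht).deriv
  have hcomb : ContDiffOn ℝ 2 (fun x => a * f x + b * g x) Uo :=
    ((hf.const_smul a).add (hg.const_smul b) : )
  have hc1 : deriv (fun t => fderiv ℝ (fun x => a * f x + b * g x) (t, y) (1, 0)) x
      = a * deriv (fun t => fderiv ℝ f (t, y) (1, 0)) x
        + b * deriv (fun t => fderiv ℝ g (t, y) (1, 0)) x := by
    have heq : (fun t => fderiv ℝ (fun x => a * f x + b * g x) (t, y) (1, 0))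
        =ᶠ[nhds x] (fun t => a * fderiv ℝ f (t, y) (1, 0) + b * fderiv ℝ g (t, y) (1, 0)) := by
      filter_upwards [hnb1] with t ht
      have h1 := slice1_deriv hU hf ht
      have h2 := slice1_deriv hU hg ht
      have h3 := slice1_deriv hU hcomb ht
      have h4 : HasDerivAt (fun s => a * f (s, y) + b * g (s, y))
          (a * fderiv ℝ f (t, y) (1, 0) + b * fderiv ℝ g (t, y) (1, 0)) t :=
        (h1.const_mul a).add (h2.const_mul b)
      exact h3.unique h4
    rw [heq.deriv_eq]
    rw [deriv_fun_add ((fderiv_apply_diff1 hU hf hp _).const_mul a)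
      ((fderiv_apply_diff1 hU hg hp _).const_mul b),
      deriv_const_mul _ (fderiv_apply_diff1 hU hf hp _),
      deriv_const_mul _ (fderiv_apply_diff1 hU hg hp _)]
  have hc2 : deriv (fun t => fderiv ℝ (fun x => a * f x + b * g x) (x, t) (0, 1)) y
      = a * deriv (fun t => fderiv ℝ f (x, t) (0, 1)) y
        + b * deriv (fun t => fderiv ℝ g (x, t) (0, 1)) y := by
    have heq : (fun t => fderiv ℝ (fun x => a * f x + b * g x) (x, t) (0, 1))
        =ᶠ[nhds y] (fun t => a * fderiv ℝ f (x, t) (0, 1) + b * fderiv ℝ g (x, t) (0, 1)) := by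
      filter_upwards [hnb2] with t ht
      have h1 := slice2_deriv hU hf ht
      have h2 := slice2_deriv hU hg ht
      have h3 := slice2_deriv hU hcomb ht
      have h4 : HasDerivAt (fun s => a * f (x, s) + b * g (x, s))
          (a * fderiv ℝ f (x, t) (0, 1) + b * fderiv ℝ g (x, t) (0, 1)) t :=
        (h1.const_mul a).add (h2.const_mul b)
      exact h3.unique h4
    rw [heq.deriv_eq]
    rw [deriv_fun_add ((fderiv_apply_diff2 hU hf hp _).const_mul a)
      ((fderiv_apply_diff2 hU hg hp _).const_mul b),
      deriv_const_mul _ (fderiv_apply_diff2 hU hf hp _),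
      deriv_const_mul _ (fderiv_apply_diff2 hU hg hp _)]
  simp only [lap]
  rw [key1 _ hcomb, key2 _ hcomb, key1 f hf, key2 f hf, key1 g hg, key2 g hg, hc1, hc2]
  ring

lemma polarLap {S : Set ℝ} (f g : ℝ → ℝ) (V : ℝ × ℝ → ℝ) (c r δ : ℝ)
    (hS : IsOpen S) (hf : ContDiffOn ℝ 2 f S) (hg : ContDiffOn ℝ 2 g S)
    (hr : r ∈ S) (hr0 : 0 < r) (hδ : 0 < δ)
    (hmem : ∀ t : ℝ, |t| < δ → Real.sqrt (r^2 + t^2) ∈ S)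
    (hV0 : ∀ s ∈ S, V (s, 0) = f s)
    (hVt : ∀ t : ℝ, |t| < δ → V (r, t) =
      f (Real.sqrt (r^2 + t^2)) * Real.cos (c * Real.arctan (t / r))
      - g (Real.sqrt (r^2 + t^2)) * Real.sin (c * Real.arctan (t / r))) :
    lap V (r, 0) = deriv (deriv f) r + deriv f r / r - c^2 * f r / r^2 := by
  have hfd : DifferentiableOn ℝ f S := hf.differentiableOn two_ne_zero
  have hgd : DifferentiableOn ℝ g S := hg.differentiableOn two_ne_zero
  have hfd' : DifferentiableOn ℝ (deriv f) S :=
    (hf.deriv_of_isOpen hS (m := 1) (by norm_num)).differentiableOn one_ne_zero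
  have hgd' : DifferentiableOn ℝ (deriv g) S :=
    (hg.deriv_of_isOpen hS (m := 1) (by norm_num)).differentiableOn one_ne_zero
  have hsq : ∀ t : ℝ, r^2 + t^2 ≠ 0 := fun t => by positivity
  have hρpos : ∀ t : ℝ, 0 < Real.sqrt (r^2 + t^2) := fun t =>
    Real.sqrt_pos.2 (lt_of_lt_of_le (by positivity) (by nlinarith [sq_nonneg t] : r^2 ≤ r^2 + t^2))
  have hρ0 : Real.sqrt (r^2 + 0^2) = r := by
    rw [show r^2 + 0^2 = r^2 by ring, Real.sqrt_sq hr0.le]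
  have hρat : ∀ t : ℝ, HasDerivAt (fun u : ℝ => Real.sqrt (r^2 + u^2))
      ((2*t) / (2 * Real.sqrt (r^2 + t^2))) t := by
    intro t
    have h1 : HasDerivAt (fun u : ℝ => r^2 + u^2) (2*t) t := by
      simpa using (hasDerivAt_pow 2 t).const_add (r^2)
    exact h1.sqrt (hsq t)
  have hθat : ∀ t : ℝ, HasDerivAt (fun u : ℝ => c * Real.arctan (u / r))
      (c * (1 / (1 + (t/r)^2) * (1/r))) t := by
    intro t
    have h1 : HasDerivAt (fun u : ℝ => u / r) (1/r) t := by
      simpa using (hasDerivAt_id t).div_const r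
    exact ((Real.hasDerivAt_arctan (t/r)).comp t h1).const_mul c
  have hD1 : deriv (fun t => deriv (fun s => V (s, (0:ℝ))) t) r = deriv (deriv f) r := by
    apply Filter.EventuallyEq.deriv_eq
    filter_upwards [hS.mem_nhds hr] with t ht
    apply Filter.EventuallyEq.deriv_eq
    filter_upwards [hS.mem_nhds ht] with s hs
    exact hV0 s hs
  have hIoo : Set.Ioo (-δ) δ ∈ nhds (0:ℝ) := Ioo_mem_nhds (by linarith) hδ
  have hfC : ∀ t : ℝ, |t| < δ → HasDerivAt f (deriv f (Real.sqrt (r^2 + t^2))) (Real.sqrt (r^2 + t^2)) :=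
    fun t ht => (hfd.differentiableAt (hS.mem_nhds (hmem t ht))).hasDerivAt
  have hgC : ∀ t : ℝ, |t| < δ → HasDerivAt g (deriv g (Real.sqrt (r^2 + t^2))) (Real.sqrt (r^2 + t^2)) :=
    fun t ht => (hgd.differentiableAt (hS.mem_nhds (hmem t ht))).hasDerivAt
  have hstep1 : ∀ t : ℝ, |t| < δ → HasDerivAt (fun s => V (r, s))
      ((deriv f (Real.sqrt (r^2 + t^2)) * ((2*t) / (2 * Real.sqrt (r^2 + t^2)))) * Real.cos (c * Real.arctan (t / r))
        + f (Real.sqrt (r^2 + t^2)) * (-Real.sin (c * Real.arctan (t / r)) * (c * (1 / (1 + (t/r)^2) * (1/r))))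
        - ((deriv g (Real.sqrt (r^2 + t^2)) * ((2*t) / (2 * Real.sqrt (r^2 + t^2)))) * Real.sin (c * Real.arctan (t / r))
        + g (Real.sqrt (r^2 + t^2)) * (Real.cos (c * Real.arctan (t / r)) * (c * (1 / (1 + (t/r)^2) * (1/r)))))) t := by
    intro t ht
    have hcos : HasDerivAt (fun u : ℝ => Real.cos (c * Real.arctan (u / r)))
        (-Real.sin (c * Real.arctan (t / r)) * (c * (1 / (1 + (t/r)^2) * (1/r)))) t :=
      ((Real.hasDerivAt_cos (c * Real.arctan (t / r))).comp t (hθat t) :)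
    have hsin : HasDerivAt (fun u : ℝ => Real.sin (c * Real.arctan (u / r)))
        (Real.cos (c * Real.arctan (t / r)) * (c * (1 / (1 + (t/r)^2) * (1/r)))) t :=
      ((Real.hasDerivAt_sin (c * Real.arctan (t / r))).comp t (hθat t) :)
    have hfρ : HasDerivAt (fun u : ℝ => f (Real.sqrt (r^2 + u^2)))
        (deriv f (Real.sqrt (r^2 + t^2)) * ((2*t) / (2 * Real.sqrt (r^2 + t^2)))) t :=
      (hfC t ht).comp t (hρat t)
    have hgρ : HasDerivAt (fun u : ℝ => g (Real.sqrt (r^2 + u^2)))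
        (deriv g (Real.sqrt (r^2 + t^2)) * ((2*t) / (2 * Real.sqrt (r^2 + t^2)))) t :=
      (hgC t ht).comp t (hρat t)
    have hbig := (hfρ.mul hcos).sub (hgρ.mul hsin)
    apply hbig.congr_of_eventuallyEq
    have htm : Set.Ioo (-δ) δ ∈ nhds t :=
      Ioo_mem_nhds (by cases abs_lt.1 ht; linarith) (by cases abs_lt.1 ht; linarith)
    filter_upwards [htm] with s hs
    rw [hVt s (abs_lt.2 ⟨hs.1, hs.2⟩)]
    rfl
  have hD2a : deriv (fun t => deriv (fun s => V (r, s)) t) 0 =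
      deriv (fun t => (deriv f (Real.sqrt (r^2 + t^2)) * ((2*t) / (2 * Real.sqrt (r^2 + t^2)))) * Real.cos (c * Real.arctan (t / r))
        + f (Real.sqrt (r^2 + t^2)) * (-Real.sin (c * Real.arctan (t / r)) * (c * (1 / (1 + (t/r)^2) * (1/r))))
        - ((deriv g (Real.sqrt (r^2 + t^2)) * ((2*t) / (2 * Real.sqrt (r^2 + t^2)))) * Real.sin (c * Real.arctan (t / r))
        + g (Real.sqrt (r^2 + t^2)) * (Real.cos (c * Real.arctan (t / r)) * (c * (1 / (1 + (t/r)^2) * (1/r)))))) 0 := by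
    apply Filter.EventuallyEq.deriv_eq
    filter_upwards [hIoo] with t ht
    exact (hstep1 t (abs_lt.2 ⟨ht.1, ht.2⟩)).deriv
  have h0δ : |(0:ℝ)| < δ := by simpa using hδ
  have hdf2 : HasDerivAt (deriv f) (deriv (deriv f) (Real.sqrt (r^2+0^2))) (Real.sqrt (r^2+0^2)) := by
    rw [hρ0]; exact (hfd'.differentiableAt (hS.mem_nhds hr)).hasDerivAt
  have hdg2 : HasDerivAt (deriv g) (deriv (deriv g) (Real.sqrt (r^2+0^2))) (Real.sqrt (r^2+0^2)) := by
    rw [hρ0]; exact (hgd'.differentiableAt (hS.mem_nhds hr)).hasDerivAt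
  have h_a : HasDerivAt (fun t : ℝ => deriv f (Real.sqrt (r^2 + t^2)))
      (deriv (deriv f) (Real.sqrt (r^2+0^2)) * ((2*0) / (2 * Real.sqrt (r^2+0^2)))) 0 :=
    (hdf2.comp 0 (hρat 0) :)
  have h_ag : HasDerivAt (fun t : ℝ => deriv g (Real.sqrt (r^2 + t^2)))
      (deriv (deriv g) (Real.sqrt (r^2+0^2)) * ((2*0) / (2 * Real.sqrt (r^2+0^2)))) 0 :=
    (hdg2.comp 0 (hρat 0) :)
  have hnum : HasDerivAt (fun t : ℝ => 2*t) 2 0 := by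
    simpa using (hasDerivAt_id (0:ℝ)).const_mul 2
  have hden := (hρat 0).const_mul 2
  have hquot := hnum.div hden (by have := hρpos 0; positivity)
  have hcos0 : HasDerivAt (fun u : ℝ => Real.cos (c * Real.arctan (u / r)))
      (-Real.sin (c * Real.arctan (0 / r)) * (c * (1 / (1 + (0/r)^2) * (1/r)))) 0 :=
    ((Real.hasDerivAt_cos (c * Real.arctan (0 / r))).comp 0 (hθat 0) :)
  have hsin0 : HasDerivAt (fun u : ℝ => Real.sin (c * Real.arctan (u / r)))
      (Real.cos (c * Real.arctan (0 / r)) * (c * (1 / (1 + (0/r)^2) * (1/r)))) 0 :=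
    ((Real.hasDerivAt_sin (c * Real.arctan (0 / r))).comp 0 (hθat 0) :)
  have hfρ0 : HasDerivAt (fun t : ℝ => f (Real.sqrt (r^2 + t^2)))
      (deriv f (Real.sqrt (r^2+0^2)) * ((2*0) / (2 * Real.sqrt (r^2+0^2)))) 0 :=
    (hfC 0 h0δ).comp 0 (hρat 0)
  have hgρ0 : HasDerivAt (fun t : ℝ => g (Real.sqrt (r^2 + t^2)))
      (deriv g (Real.sqrt (r^2+0^2)) * ((2*0) / (2 * Real.sqrt (r^2+0^2)))) 0 :=
    (hgC 0 h0δ).comp 0 (hρat 0)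
  have hinner : HasDerivAt (fun t : ℝ => 1 + (t/r)^2) (2*((0:ℝ)/r)^1*(1/r)) 0 := by
    have h1 : HasDerivAt (fun t : ℝ => t / r) (1/r) 0 := by
      simpa using (hasDerivAt_id (0:ℝ)).div_const r
    simpa using ((h1.pow 2).const_add 1)
  have hq : HasDerivAt (fun t : ℝ => c * (1 / (1 + (t/r)^2) * (1/r)))
      (c * ((0 * (1 + (0/r)^2) - 1 * (2*((0:ℝ)/r)^1*(1/r))) / (1 + (0/r)^2)^2 * (1/r))) 0 := by
    exact (((hasDerivAt_const (0:ℝ) (1:ℝ)).div hinner (by norm_num)).mul_const (1/r)).const_mul c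
  have hC := (hsin0.neg).mul hq
  have hD := hcos0.mul hq
  have hDD := (((h_a.mul hquot).mul hcos0).add (hfρ0.mul hC)).sub
    (((h_ag.mul hquot).mul hsin0).add (hgρ0.mul hD))
  have hD2' : deriv (fun t => deriv (fun s => V (r, s)) t) 0 =
      deriv f r / r - c^2 * f r / r^2 := by
    rw [hD2a]
    have := hDD.deriv
    simp only [Pi.mul_apply, Pi.div_apply, Pi.neg_apply] at this
    refine this.trans ?_
    simp only [hρ0, zero_div, Real.arctan_zero, mul_zero, zero_mul, Real.sin_zero,
      Real.cos_zero, neg_zero, mul_one, add_zero, zero_add, mul_neg, neg_mul, sub_zero]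
    field_simp
    ring
  simp only [lap]
  rw [hD1, hD2']
  ring

lemma Epolar (k : ℤ) (φ a0 a1 a2 : ℝ) :
    a0 • E0 + a1 • E1 k φ + a2 • E2mat k φ =
    !![ -(Real.sqrt 6/6)*a0 + (Real.sqrt 2/2)*(a1 * Real.cos ((k:ℝ)*φ) - a2 * Real.sin ((k:ℝ)*φ)),
        (Real.sqrt 2/2)*(a1 * Real.sin ((k:ℝ)*φ) + a2 * Real.cos ((k:ℝ)*φ)), 0;
        (Real.sqrt 2/2)*(a1 * Real.sin ((k:ℝ)*φ) + a2 * Real.cos ((k:ℝ)*φ)),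
        -(Real.sqrt 6/6)*a0 - (Real.sqrt 2/2)*(a1 * Real.cos ((k:ℝ)*φ) - a2 * Real.sin ((k:ℝ)*φ)), 0;
        0, 0, (Real.sqrt 6/3)*a0] := by
  have h2m : Real.sqrt 2 * Real.sqrt 2 = 2 := Real.mul_self_sqrt (by norm_num)
  have h2p : (0:ℝ) < Real.sqrt 2 := Real.sqrt_pos.2 (by norm_num)
  have hinv : (Real.sqrt 2)⁻¹ = Real.sqrt 2 / 2 := by
    field_simp
    exact (Real.sq_sqrt (by norm_num)).symm
  have h32 : Real.sqrt (3/2 : ℝ) = Real.sqrt 6 / 2 := by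
    rw [show (3/2 : ℝ) = 6/4 by norm_num, Real.sqrt_div (by norm_num : (0:ℝ) ≤ 6),
      show (4:ℝ) = 2^2 by norm_num, Real.sqrt_sq (by norm_num : (0:ℝ) ≤ 2)]
  have hc := Real.cos_two_mul ((k:ℝ)*φ/2)
  rw [show 2*((k:ℝ)*φ/2) = (k:ℝ)*φ by ring] at hc
  have hs := Real.sin_two_mul ((k:ℝ)*φ/2)
  rw [show 2*((k:ℝ)*φ/2) = (k:ℝ)*φ by ring] at hs
  ext i j
  fin_cases i <;> fin_cases j <;>
    simp [E0, E1, E2mat, nvec, mvec, I2, e3, Matrix.vecMulVec_apply, Matrix.one_apply,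
      h32, hinv, hc, hs] <;>
    (try ring) <;> (try (ring_nf; simp only [Real.sin_sq]; ring)) <;>
    linear_combination (-(Real.sqrt 2 * a2 / 2)) * Real.sin_sq_add_cos_sq ((k:ℝ)*φ*(1/2))

lemma ELkey (a2 b2 c2 x y z : ℝ) :
    (ELrhs a2 b2 c2 (!![y - x, z, 0; z, -y - x, 0; 0, 0, 2*x]) 0 0
      - ELrhs a2 b2 c2 (!![y - x, z, 0; z, -y - x, 0; 0, 0, 2*x]) 1 1) * z
      - 2 * ELrhs a2 b2 c2 (!![y - x, z, 0; z, -y - x, 0; 0, 0, 2*x]) 0 1 * y = 0 := by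
  simp [ELrhs, Matrix.mul_apply, Fin.sum_univ_three, Matrix.trace_fin_three,
    Matrix.smul_apply, Matrix.sub_apply, Matrix.add_apply, Matrix.neg_apply, Matrix.one_apply]
  ring

end AuxLemmas

/-- for a `k`-radially symmetric `C²` solution of the Euler–Lagrange
equation on `B_R`, one has `w₁'w₂ − w₂'w₁ = 0` on `(0,R)`. -/
theorem stmt14 (a2 b2 c2 : ℝ) (ha : 0 < a2) (hb : 0 < b2) (hc : 0 < c2)
    (k : ℤ) (hk : k ≠ 0) (R : ℝ≥0∞) (hR : 0 < R)
    (w₀ w₁ w₂ : ℝ → ℝ)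
    (hw₀ : ContDiffOn ℝ 2 w₀ {r : ℝ | 0 < r ∧ ENNReal.ofReal r < R})
    (hw₁ : ContDiffOn ℝ 2 w₁ {r : ℝ | 0 < r ∧ ENNReal.ofReal r < R})
    (hw₂ : ContDiffOn ℝ 2 w₂ {r : ℝ | 0 < r ∧ ENNReal.ofReal r < R})
    (Q : ℝ × ℝ → Mat3)
    (hQreg : ∀ i j, ContDiffOn ℝ 2 (fun x => Q x i j) {x | inBall R x})
    (hQ : ∀ r φ : ℝ, 0 < r → ENNReal.ofReal r < R →
      Q (r * Real.cos φ, r * Real.sin φ) = w₀ r • E0 + w₁ r • E1 k φ + w₂ r • E2mat k φ)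
    (hEL : ∀ x, inBall R x → matLap Q x = ELrhs a2 b2 c2 (Q x)) :
    ∀ r : ℝ, 0 < r → ENNReal.ofReal r < R →
      deriv w₁ r * w₂ r - deriv w₂ r * w₁ r = 0 := by
  have h2m : Real.sqrt 2 * Real.sqrt 2 = 2 := Real.mul_self_sqrt (by norm_num)
  have h2p : (0:ℝ) < Real.sqrt 2 := Real.sqrt_pos.2 (by norm_num)
  have h2ne : Real.sqrt 2 ≠ 0 := ne_of_gt h2p
  have hinv : (Real.sqrt 2)⁻¹ = Real.sqrt 2 / 2 := by field_simp; exact (Real.sq_sqrt (by norm_num)).symm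
  set S : Set ℝ := {r : ℝ | 0 < r ∧ ENNReal.ofReal r < R} with hSdef
  have hSopen : IsOpen S := by
    have : S = Set.Ioi 0 ∩ ENNReal.ofReal ⁻¹' (Set.Iio R) := by
      ext s; simp [hSdef]
    rw [this]
    exact isOpen_Ioi.inter (ENNReal.continuous_ofReal.isOpen_preimage _ isOpen_Iio)
  set B : Set (ℝ × ℝ) := {x | inBall R x} with hBdef
  have hBopen : IsOpen B := by
    have hcont : Continuous fun x : ℝ × ℝ => ENNReal.ofReal (Real.sqrt (x.1^2 + x.2^2)) :=
      ENNReal.continuous_ofReal.comp (((continuous_fst.pow 2).add (continuous_snd.pow 2)).sqrt)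
    have hBeq : B = (fun x : ℝ × ℝ => ENNReal.ofReal (Real.sqrt (x.1^2 + x.2^2))) ⁻¹' (Set.Iio R) := by
      ext x; simp [hBdef, inBall]
    rw [hBeq]
    exact hcont.isOpen_preimage _ isOpen_Iio
  have hmemB : ∀ s ∈ S, ((s, (0:ℝ)) : ℝ × ℝ) ∈ B := by
    intro s hs
    have : Real.sqrt (s^2 + (0:ℝ)^2) = s := by
      rw [show s^2 + (0:ℝ)^2 = s^2 by ring, Real.sqrt_sq hs.1.le]
    simp only [hBdef, Set.mem_setOf_eq, inBall, this]
    exact hs.2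
  -- the polar form of Q at angle 0
  have hQr0 : ∀ s ∈ S, Q (s, 0) =
      !![Real.sqrt 2 * w₁ s/2 - Real.sqrt 6 * w₀ s/6, Real.sqrt 2 * w₂ s/2, 0;
         Real.sqrt 2 * w₂ s/2, -(Real.sqrt 2 * w₁ s/2) - Real.sqrt 6 * w₀ s/6, 0;
         0, 0, 2*(Real.sqrt 6 * w₀ s/6)] := by
    intro s hs
    have h := hQ s 0 hs.1 hs.2
    rw [show ((s * Real.cos 0, s * Real.sin 0) : ℝ × ℝ) = (s, 0) by simp] at h
    rw [h, Epolar]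
    ext i j
    fin_cases i <;> fin_cases j <;> simp <;> ring
  -- slice values on the positive x-axis
  have hV0 : ∀ s ∈ S,
      ((Real.sqrt 2)⁻¹ * Q (s, 0) 0 0 + (-(Real.sqrt 2)⁻¹) * Q (s, 0) 1 1) = w₁ s := by
    intro s hs
    rw [hQr0 s hs]
    simp [hinv]
    linear_combination (w₁ s / 2) * h2m
  have hU0 : ∀ s ∈ S,
      (Real.sqrt 2 * Q (s, 0) 0 1 + 0 * Q (s, 0) 1 1) = w₂ s := by
    intro s hs
    rw [hQr0 s hs]
    simp
    linear_combination (w₂ s / 2) * h2m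
  -- main pointwise identity on S
  have hmain : ∀ r ∈ S,
      (deriv (deriv w₁) r + deriv w₁ r / r - ((k:ℝ))^2 * w₁ r / r^2) * w₂ r
      - (deriv (deriv w₂) r + deriv w₂ r / r - ((k:ℝ))^2 * w₂ r / r^2) * w₁ r = 0 := by
    intro r hr
    obtain ⟨r', hrr', hr'S⟩ : ∃ r', r < r' ∧ r' ∈ S := by
      rcases eq_or_ne R ⊤ with hT | hT
      · exact ⟨r+1, by linarith [hr.1], ⟨by linarith [hr.1], by simp [hT]⟩⟩
      · have hlt : r < R.toReal := (ENNReal.ofReal_lt_iff_lt_toReal hr.1.le hT).1 hr.2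
        refine ⟨(r + R.toReal)/2, by linarith, ⟨by linarith [hr.1], ?_⟩⟩
        rw [ENNReal.ofReal_lt_iff_lt_toReal (by linarith [hr.1]) hT]
        linarith
    have hr0 : 0 < r := hr.1
    have hδ : 0 < r' - r := by linarith
    have hmemS : ∀ t : ℝ, |t| < r' - r → Real.sqrt (r^2 + t^2) ∈ S := by
      intro t ht
      have h1 : r ≤ Real.sqrt (r^2 + t^2) := by
        rw [show r = Real.sqrt (r^2) from (Real.sqrt_sq hr0.le).symm]
        exact Real.sqrt_le_sqrt (by nlinarith [sq_nonneg t, Real.sq_sqrt (sq_nonneg r)])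
      have h2 : Real.sqrt (r^2 + t^2) ≤ r + |t| := by
        rw [show r + |t| = Real.sqrt ((r + |t|)^2) from (Real.sqrt_sq (by positivity)).symm]
        exact Real.sqrt_le_sqrt (by nlinarith [abs_nonneg t, sq_abs t])
      have h3 : Real.sqrt (r^2 + t^2) ≤ r' := by linarith
      refine ⟨lt_of_lt_of_le hr0 h1, lt_of_le_of_lt ?_ hr'S.2⟩
      exact ENNReal.ofReal_le_ofReal h3
    -- Q along the vertical slice through (r,0)
    have hQrt : ∀ t : ℝ, |t| < r' - r → Q (r, t) =
        !![ -(Real.sqrt 6/6)*(w₀ (Real.sqrt (r^2+t^2))) + (Real.sqrt 2/2)*((w₁ (Real.sqrt (r^2+t^2))) * Real.cos ((k:ℝ)*Real.arctan (t/r)) - (w₂ (Real.sqrt (r^2+t^2))) * Real.sin ((k:ℝ)*Real.arctan (t/r))),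
            (Real.sqrt 2/2)*((w₁ (Real.sqrt (r^2+t^2))) * Real.sin ((k:ℝ)*Real.arctan (t/r)) + (w₂ (Real.sqrt (r^2+t^2))) * Real.cos ((k:ℝ)*Real.arctan (t/r))), 0;
            (Real.sqrt 2/2)*((w₁ (Real.sqrt (r^2+t^2))) * Real.sin ((k:ℝ)*Real.arctan (t/r)) + (w₂ (Real.sqrt (r^2+t^2))) * Real.cos ((k:ℝ)*Real.arctan (t/r))),
            -(Real.sqrt 6/6)*(w₀ (Real.sqrt (r^2+t^2))) - (Real.sqrt 2/2)*((w₁ (Real.sqrt (r^2+t^2))) * Real.cos ((k:ℝ)*Real.arctan (t/r)) - (w₂ (Real.sqrt (r^2+t^2))) * Real.sin ((k:ℝ)*Real.arctan (t/r))), 0;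
            0, 0, (Real.sqrt 6/3)*(w₀ (Real.sqrt (r^2+t^2)))] := by
      intro t ht
      have hρS := hmemS t ht
      have hρpos : 0 < Real.sqrt (r^2 + t^2) := hρS.1
      have hsub : (1 : ℝ) + (t/r)^2 = (r^2 + t^2)/r^2 := by field_simp
      have hsq2 : Real.sqrt ((1:ℝ) + (t/r)^2) = Real.sqrt (r^2+t^2) / r := by
        rw [hsub, Real.sqrt_div (by positivity) _, Real.sqrt_sq hr0.le]
      have hcosθ : Real.sqrt (r^2+t^2) * Real.cos (Real.arctan (t/r)) = r := by
        rw [Real.cos_arctan, hsq2]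
        field_simp
      have hsinθ : Real.sqrt (r^2+t^2) * Real.sin (Real.arctan (t/r)) = t := by
        rw [Real.sin_arctan, hsq2]
        field_simp
      have h := hQ (Real.sqrt (r^2+t^2)) (Real.arctan (t/r)) hρpos hρS.2
      rw [show ((Real.sqrt (r^2+t^2) * Real.cos (Real.arctan (t/r)),
          Real.sqrt (r^2+t^2) * Real.sin (Real.arctan (t/r))) : ℝ × ℝ) = (r, t) by
        rw [hcosθ, hsinθ]] at h
      rw [h, Epolar]
    have hVt : ∀ t : ℝ, |t| < r' - r →
        ((Real.sqrt 2)⁻¹ * Q (r, t) 0 0 + (-(Real.sqrt 2)⁻¹) * Q (r, t) 1 1) =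
        w₁ (Real.sqrt (r^2 + t^2)) * Real.cos ((k:ℝ) * Real.arctan (t / r))
        - w₂ (Real.sqrt (r^2 + t^2)) * Real.sin ((k:ℝ) * Real.arctan (t / r)) := by
      intro t ht
      rw [hQrt t ht]
      simp [hinv]
      linear_combination ((w₁ (Real.sqrt (r^2 + t^2)) * Real.cos ((k:ℝ) * Real.arctan (t / r))
        - w₂ (Real.sqrt (r^2 + t^2)) * Real.sin ((k:ℝ) * Real.arctan (t / r))) / 2) * h2m
    have hUt : ∀ t : ℝ, |t| < r' - r →
        (Real.sqrt 2 * Q (r, t) 0 1 + 0 * Q (r, t) 1 1) =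
        w₂ (Real.sqrt (r^2 + t^2)) * Real.cos ((k:ℝ) * Real.arctan (t / r))
        - (fun s => -w₁ s) (Real.sqrt (r^2 + t^2)) * Real.sin ((k:ℝ) * Real.arctan (t / r)) := by
      intro t ht
      rw [hQrt t ht]
      simp
      linear_combination ((w₂ (Real.sqrt (r^2 + t^2)) * Real.cos ((k:ℝ) * Real.arctan (t / r))
        + w₁ (Real.sqrt (r^2 + t^2)) * Real.sin ((k:ℝ) * Real.arctan (t / r))) / 2) * h2m
    -- apply the polar Laplacian computation
    have hPV : lap (fun x => (Real.sqrt 2)⁻¹ * Q x 0 0 + (-(Real.sqrt 2)⁻¹) * Q x 1 1) (r, 0) =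
        deriv (deriv w₁) r + deriv w₁ r / r - ((k:ℝ))^2 * w₁ r / r^2 :=
      polarLap w₁ w₂ _ ((k:ℝ)) r (r' - r) hSopen hw₁ hw₂ hr hr0 hδ hmemS hV0 hVt
    have hPU : lap (fun x => Real.sqrt 2 * Q x 0 1 + 0 * Q x 1 1) (r, 0) =
        deriv (deriv w₂) r + deriv w₂ r / r - ((k:ℝ))^2 * w₂ r / r^2 :=
      polarLap w₂ (fun s => -w₁ s) _ ((k:ℝ)) r (r' - r) hSopen hw₂ hw₁.neg hr hr0 hδ hmemS hU0 hUt
    -- Laplacian linearity and EL equation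
    have hpB : ((r, (0:ℝ)) : ℝ × ℝ) ∈ B := hmemB r hr
    have hELp := hEL (r, 0) hpB
    have hmV : lap (fun x => (Real.sqrt 2)⁻¹ * Q x 0 0 + (-(Real.sqrt 2)⁻¹) * Q x 1 1) (r, 0) =
        (Real.sqrt 2)⁻¹ * ELrhs a2 b2 c2 (Q (r, 0)) 0 0
        + (-(Real.sqrt 2)⁻¹) * ELrhs a2 b2 c2 (Q (r, 0)) 1 1 := by
      rw [lap_comb hBopen _ _ hpB (hQreg 0 0) (hQreg 1 1)]
      have e1 : lap (fun x => Q x 0 0) (r, 0) = ELrhs a2 b2 c2 (Q (r, 0)) 0 0 := by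
        have := congrFun (congrFun hELp 0) 0
        simpa [matLap] using this
      have e2 : lap (fun x => Q x 1 1) (r, 0) = ELrhs a2 b2 c2 (Q (r, 0)) 1 1 := by
        have := congrFun (congrFun hELp 1) 1
        simpa [matLap] using this
      rw [e1, e2]
    have hmU : lap (fun x => Real.sqrt 2 * Q x 0 1 + 0 * Q x 1 1) (r, 0) =
        Real.sqrt 2 * ELrhs a2 b2 c2 (Q (r, 0)) 0 1
        + 0 * ELrhs a2 b2 c2 (Q (r, 0)) 1 1 := by
      rw [lap_comb hBopen _ _ hpB (hQreg 0 1) (hQreg 1 1)]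
      have e1 : lap (fun x => Q x 0 1) (r, 0) = ELrhs a2 b2 c2 (Q (r, 0)) 0 1 := by
        have := congrFun (congrFun hELp 0) 1
        simpa [matLap] using this
      have e2 : lap (fun x => Q x 1 1) (r, 0) = ELrhs a2 b2 c2 (Q (r, 0)) 1 1 := by
        have := congrFun (congrFun hELp 1) 1
        simpa [matLap] using this
      rw [e1, e2]
    -- put everything together via the algebraic identity
    have hAmat : Q (r, 0) =
        !![Real.sqrt 2 * w₁ r/2 - Real.sqrt 6 * w₀ r/6, Real.sqrt 2 * w₂ r/2, 0;
           Real.sqrt 2 * w₂ r/2, -(Real.sqrt 2 * w₁ r/2) - Real.sqrt 6 * w₀ r/6, 0;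
           0, 0, 2*(Real.sqrt 6 * w₀ r/6)] := hQr0 r hr
    have hkey := ELkey a2 b2 c2 (Real.sqrt 6 * w₀ r/6) (Real.sqrt 2 * w₁ r/2) (Real.sqrt 2 * w₂ r/2)
    rw [← hPV, ← hPU, hmV, hmU, hAmat]
    set E00 := ELrhs a2 b2 c2 (!![Real.sqrt 2 * w₁ r/2 - Real.sqrt 6 * w₀ r/6, Real.sqrt 2 * w₂ r/2, 0;
           Real.sqrt 2 * w₂ r/2, -(Real.sqrt 2 * w₁ r/2) - Real.sqrt 6 * w₀ r/6, 0;
           0, 0, 2*(Real.sqrt 6 * w₀ r/6)]) 0 0 with hE00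
    set E11 := ELrhs a2 b2 c2 (!![Real.sqrt 2 * w₁ r/2 - Real.sqrt 6 * w₀ r/6, Real.sqrt 2 * w₂ r/2, 0;
           Real.sqrt 2 * w₂ r/2, -(Real.sqrt 2 * w₁ r/2) - Real.sqrt 6 * w₀ r/6, 0;
           0, 0, 2*(Real.sqrt 6 * w₀ r/6)]) 1 1 with hE11
    set E01 := ELrhs a2 b2 c2 (!![Real.sqrt 2 * w₁ r/2 - Real.sqrt 6 * w₀ r/6, Real.sqrt 2 * w₂ r/2, 0;
           Real.sqrt 2 * w₂ r/2, -(Real.sqrt 2 * w₁ r/2) - Real.sqrt 6 * w₀ r/6, 0;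
           0, 0, 2*(Real.sqrt 6 * w₀ r/6)]) 0 1 with hE01
    rw [hinv]
    linear_combination hkey
  -- derivative of the conserved quantity vanishes
  have hLder : ∀ s ∈ S, HasDerivAt
      (fun u => u * (deriv w₁ u * w₂ u - deriv w₂ u * w₁ u)) 0 s := by
    intro s hs
    have hsne : s ≠ 0 := ne_of_gt hs.1
    have h1 : HasDerivAt w₁ (deriv w₁ s) s :=
      ((hw₁.differentiableOn two_ne_zero).differentiableAt (hSopen.mem_nhds hs)).hasDerivAt
    have h2 : HasDerivAt w₂ (deriv w₂ s) s :=
      ((hw₂.differentiableOn two_ne_zero).differentiableAt (hSopen.mem_nhds hs)).hasDerivAt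
    have h1' : HasDerivAt (deriv w₁) (deriv (deriv w₁) s) s :=
      ((((hw₁.deriv_of_isOpen hSopen (m := 1) (by norm_num)).differentiableOn one_ne_zero)).differentiableAt
        (hSopen.mem_nhds hs)).hasDerivAt
    have h2' : HasDerivAt (deriv w₂) (deriv (deriv w₂) s) s :=
      ((((hw₂.deriv_of_isOpen hSopen (m := 1) (by norm_num)).differentiableOn one_ne_zero)).differentiableAt
        (hSopen.mem_nhds hs)).hasDerivAt
    have hId : HasDerivAt (fun u : ℝ => u) (1:ℝ) s := hasDerivAt_id s
    have hprod := hId.mul ((h1'.mul h2).sub (h2'.mul h1))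
    have hm := hmain s hs
    have hval : (1 : ℝ) * (deriv w₁ s * w₂ s - deriv w₂ s * w₁ s)
        + s * ((deriv (deriv w₁) s * w₂ s + deriv w₁ s * deriv w₂ s)
          - (deriv (deriv w₂) s * w₁ s + deriv w₂ s * deriv w₁ s)) = 0 := by
      field_simp at hm
      have hval2 : s^2 * ((1 : ℝ) * (deriv w₁ s * w₂ s - deriv w₂ s * w₁ s)
          + s * ((deriv (deriv w₁) s * w₂ s + deriv w₁ s * deriv w₂ s)
            - (deriv (deriv w₂) s * w₁ s + deriv w₂ s * deriv w₁ s))) = 0 := by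
        linear_combination s * hm
      rcases mul_eq_zero.1 hval2 with h | h
      · exact absurd h (pow_ne_zero 2 hsne)
      · exact h
    have hprod := hprod.congr_deriv hval
    exact hprod
  -- conclusion via the limit at the origin
  intro r hr0 hrR
  have hrS : r ∈ S := ⟨hr0, hrR⟩
  have hIccS : ∀ t : ℝ, 0 < t → t ≤ r → t ∈ S := by
    intro t ht htr
    exact ⟨ht, lt_of_le_of_lt (ENNReal.ofReal_le_ofReal htr) hrR⟩
  have hconst : ∀ t : ℝ, 0 < t → t < r →
      r * (deriv w₁ r * w₂ r - deriv w₂ r * w₁ r)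
        = t * (deriv w₁ t * w₂ t - deriv w₂ t * w₁ t) := by
    intro t ht htr
    have hsub : Set.Icc t r ⊆ S := fun s hs => hIccS s (lt_of_lt_of_le ht hs.1) hs.2
    have hcont : ContinuousOn (fun u => u * (deriv w₁ u * w₂ u - deriv w₂ u * w₁ u)) (Set.Icc t r) :=
      fun s hs => ((hLder s (hsub hs)).continuousAt).continuousWithinAt
    have hder : ∀ s ∈ Set.Ico t r, HasDerivWithinAt
        (fun u => u * (deriv w₁ u * w₂ u - deriv w₂ u * w₁ u)) 0 (Set.Ici s) s :=
      fun s hs => (hLder s (hsub ⟨hs.1, hs.2.le⟩)).hasDerivWithinAt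
    exact constant_of_has_deriv_right_zero hcont hder r ⟨htr.le, le_refl r⟩
  -- the slice functions through the origin
  set f₀ : ℝ → ℝ := fun s => (Real.sqrt 2)⁻¹ * Q (s, 0) 0 0 + (-(Real.sqrt 2)⁻¹) * Q (s, 0) 1 1 with hf₀def
  set g₀ : ℝ → ℝ := fun s => Real.sqrt 2 * Q (s, 0) 0 1 + 0 * Q (s, 0) 1 1 with hg₀def
  set J : Set ℝ := {s : ℝ | ((s, (0:ℝ)) : ℝ × ℝ) ∈ B} with hJdef
  have hlineC : Continuous (fun s : ℝ => ((s, (0:ℝ)) : ℝ × ℝ)) := by fun_prop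
  have hJopen : IsOpen J := hlineC.isOpen_preimage _ hBopen
  have h0J : (0:ℝ) ∈ J := by
    simp only [hJdef, Set.mem_setOf_eq, hBdef, inBall]
    norm_num
    exact hR
  have hSJ : S ⊆ J := fun s hs => hmemB s hs
  have hVregB : ContDiffOn ℝ 2 (fun x : ℝ × ℝ => (Real.sqrt 2)⁻¹ * Q x 0 0 + (-(Real.sqrt 2)⁻¹) * Q x 1 1) B :=
    (contDiffOn_const.mul (hQreg 0 0)).add (contDiffOn_const.mul (hQreg 1 1))
  have hUregB : ContDiffOn ℝ 2 (fun x : ℝ × ℝ => Real.sqrt 2 * Q x 0 1 + 0 * Q x 1 1) B :=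
    (contDiffOn_const.mul (hQreg 0 1)).add (contDiffOn_const.mul (hQreg 1 1))
  have hlineCD : ContDiff ℝ 2 (fun s : ℝ => ((s, (0:ℝ)) : ℝ × ℝ)) :=
    contDiff_id.prodMk contDiff_const
  have hf₀C : ContDiffOn ℝ 2 f₀ J :=
    hVregB.comp hlineCD.contDiffOn (fun s hs => hs)
  have hg₀C : ContDiffOn ℝ 2 g₀ J :=
    hUregB.comp hlineCD.contDiffOn (fun s hs => hs)
  have hdf₀cont : ContinuousOn (deriv f₀) J :=
    hf₀C.continuousOn_deriv_of_isOpen hJopen (by norm_num)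
  have hdg₀cont : ContinuousOn (deriv g₀) J :=
    hg₀C.continuousOn_deriv_of_isOpen hJopen (by norm_num)
  have hca : ContinuousAt (fun t => t * (deriv f₀ t * g₀ t - deriv g₀ t * f₀ t)) 0 := by
    have h1 : ContinuousAt (deriv f₀) 0 := hdf₀cont.continuousAt (hJopen.mem_nhds h0J)
    have h2 : ContinuousAt (deriv g₀) 0 := hdg₀cont.continuousAt (hJopen.mem_nhds h0J)
    have h3 : ContinuousAt f₀ 0 := (hf₀C.continuousOn.continuousAt (hJopen.mem_nhds h0J))
    have h4 : ContinuousAt g₀ 0 := (hg₀C.continuousOn.continuousAt (hJopen.mem_nhds h0J))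
    exact continuousAt_id.mul ((h1.mul h4).sub (h2.mul h3))
  have htendsto : Filter.Tendsto (fun t => t * (deriv f₀ t * g₀ t - deriv g₀ t * f₀ t))
      (nhdsWithin 0 (Set.Ioi 0)) (nhds 0) := by
    have := hca.tendsto
    rw [show (0:ℝ) * (deriv f₀ 0 * g₀ 0 - deriv g₀ 0 * f₀ 0) = 0 by ring] at this
    exact this.mono_left nhdsWithin_le_nhds
  have hagree : ∀ t ∈ S, deriv w₁ t = deriv f₀ t ∧ deriv w₂ t = deriv g₀ t
      ∧ w₁ t = f₀ t ∧ w₂ t = g₀ t := by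
    intro t ht
    have he1 : w₁ =ᶠ[nhds t] f₀ := by
      filter_upwards [hSopen.mem_nhds ht] with s hs
      exact (hV0 s hs).symm
    have he2 : w₂ =ᶠ[nhds t] g₀ := by
      filter_upwards [hSopen.mem_nhds ht] with s hs
      exact (hU0 s hs).symm
    exact ⟨he1.deriv_eq, he2.deriv_eq, he1.eq_of_nhds, he2.eq_of_nhds⟩
  have hevent : ∀ᶠ t in nhdsWithin 0 (Set.Ioi 0),
      (fun u => u * (deriv f₀ u * g₀ u - deriv g₀ u * f₀ u)) t
        = r * (deriv w₁ r * w₂ r - deriv w₂ r * w₁ r) := by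
    filter_upwards [Ioo_mem_nhdsGT_of_mem (Set.mem_Ico.2 ⟨le_refl 0, hr0⟩)] with t ht
    have htS : t ∈ S := hIccS t ht.1 ht.2.le
    obtain ⟨e1, e2, e3, e4⟩ := hagree t htS
    rw [← e1, ← e2, ← e3, ← e4]
    exact (hconst t ht.1 ht.2).symm
  have hfinal : r * (deriv w₁ r * w₂ r - deriv w₂ r * w₁ r) = 0 := by
    have h1 : Filter.Tendsto (fun _ : ℝ => r * (deriv w₁ r * w₂ r - deriv w₂ r * w₁ r))
        (nhdsWithin 0 (Set.Ioi 0)) (nhds 0) := htendsto.congr' hevent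
    exact (tendsto_nhds_unique tendsto_const_nhds h1)
  have : deriv w₁ r * w₂ r - deriv w₂ r * w₁ r = 0 := by
    rcases mul_eq_zero.1 hfinal with h | h
    · exact absurd h (ne_of_gt hr0)
    · exact h
  exact this
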